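/- Normal MPS improved bound (translationally invariant case, 2L+1 sites): Let A and B be MPS tensors such that blocking L consecutive sites yields an injective tensor, and suppose they generate the same state on n ≥ 2L+1 sites. Then the bond dimensions agree and there exist an invertible matrix Z and a scalar λ with λⁿ = 1 such that B^i = λ Z⁻¹ A^i Z for all i; Z is unique up to a multiplicative constant. -/

import Mathlib

open Matrix

namespace MPS19
variable {d : ℕ}

/-- product of matrices along a word -/
noncomputable def wp {D : ℕ} (A : Fin d → Matrix (Fin D) (Fin D) ℂ) (l : List (Fin d)) :
    Matrix (Fin D) (Fin D) ℂ := (l.map A).prod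

@[simp] lemma wp_nil {D : ℕ} (A : Fin d → Matrix (Fin D) (Fin D) ℂ) : wp A [] = 1 := rfl

@[simp] lemma wp_cons {D : ℕ} (A : Fin d → Matrix (Fin D) (Fin D) ℂ) (i : Fin d) (l : List (Fin d)) :
    wp A (i :: l) = A i * wp A l := by simp [wp]

@[simp] lemma wp_append {D : ℕ} (A : Fin d → Matrix (Fin D) (Fin D) ℂ) (l l' : List (Fin d)) :
    wp A (l ++ l') = wp A l * wp A l' := by simp [wp]

@[simp] lemma wp_singleton {D : ℕ} (A : Fin d → Matrix (Fin D) (Fin D) ℂ) (i : Fin d) :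
    wp A [i] = A i := by simp [wp]

lemma wp_ofFn {D : ℕ} (A : Fin d → Matrix (Fin D) (Fin D) ℂ) {m : ℕ} (w : Fin m → Fin d) :
    wp A (List.ofFn w) = (List.ofFn fun k => A (w k)).prod := by
  simp [wp, List.map_ofFn, Function.comp_def]

lemma exists_ofFn {m : ℕ} (l : List (Fin d)) (hl : l.length = m) :
    ∃ w : Fin m → Fin d, List.ofFn w = l := by
  subst hl; exact ⟨l.get, List.ofFn_get l⟩

/-- separation property at block length m -/
def Sep {D : ℕ} (A : Fin d → Matrix (Fin D) (Fin D) ℂ) (m : ℕ) : Prop :=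
  ∀ N : Matrix (Fin D) (Fin D) ℂ,
    (∀ l : List (Fin d), l.length = m → (wp A l * N).trace = 0) → N = 0

lemma sep_of_inj {D L : ℕ}
    (A : Fin d → Matrix (Fin D) (Fin D) ℂ)
    (hA : Function.Injective fun X : Matrix (Fin D) (Fin D) ℂ =>
      fun i : Fin L → Fin d => (((List.ofFn fun k => A (i k)).prod) * Xᵀ).trace) :
    Sep A L := by
  intro N h
  have h2 : (fun i : Fin L → Fin d => (((List.ofFn fun k => A (i k)).prod) * Nᵀᵀ).trace)
      = fun i : Fin L → Fin d => (((List.ofFn fun k => A (i k)).prod) * (0 : Matrix (Fin D) (Fin D) ℂ)ᵀ).trace := by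
    funext w
    rw [transpose_transpose, transpose_zero, mul_zero, trace_zero, ← wp_ofFn]
    exact h _ (by simp)
  have := hA h2
  simpa using congrArg transpose this

lemma sep_ge {D L : ℕ} (A : Fin d → Matrix (Fin D) (Fin D) ℂ) (hL : 1 ≤ L)
    (hsep : Sep A L) : ∀ m, L ≤ m → Sep A m := by
  refine Nat.le_induction hsep ?_
  intro m hm ih N h
  have hAi : ∀ i, A i * N = 0 := by
    intro i
    apply ih
    intro l hl
    have := h (l ++ [i]) (by simp [hl])
    simpa [mul_assoc] using this
  have hwp : ∀ l : List (Fin d), l.length = L → wp A l * N = 0 := by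
    intro l hl
    rcases List.eq_nil_or_concat l with rfl | ⟨l₀, i, rfl⟩
    · simp at hl; omega
    · rw [List.concat_eq_append, wp_append, wp_singleton, mul_assoc, hAi i, mul_zero]
  have hNM : ∀ M : Matrix (Fin D) (Fin D) ℂ, N * M = 0 := by
    intro M
    apply hsep
    intro l hl
    rw [← mul_assoc, hwp l hl, zero_mul, trace_zero]
  simpa using hNM 1

lemma trace_stdBasisMatrix_mul {D : ℕ} (a b : Fin D) (N : Matrix (Fin D) (Fin D) ℂ) :
    (single b a 1 * N).trace = N a b := by
  rw [trace]
  rw [Finset.sum_eq_single b]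
  · simp
  · intro c _ hc
    simp [Matrix.diag, Matrix.single_mul_apply_of_ne (h := hc)]
  · simp

/-- the trace pairing map into the dual -/
noncomputable def tp (D : ℕ) : Matrix (Fin D) (Fin D) ℂ →ₗ[ℂ] Module.Dual ℂ (Matrix (Fin D) (Fin D) ℂ) :=
  { toFun := fun N =>
      { toFun := fun M => (M * N).trace
        map_add' := by intro M M'; simp [add_mul, Matrix.trace_add]
        map_smul' := by intro c M; simp [smul_mul_assoc, Matrix.trace_smul] }
    map_add' := by intro N N'; ext M; simp [mul_add, Matrix.trace_add]
    map_smul' := by intro c N; ext M; simp [mul_smul_comm, Matrix.trace_smul] }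

lemma tp_surj (D : ℕ) : Function.Surjective (tp D) := by
  have hTinj : Function.Injective (tp D) := by
    intro N N' hNN
    ext a b
    have h1 : (single b a 1 * N).trace = (single b a 1 * N').trace :=
      congrArg (fun φ => φ (single b a 1)) hNN
    rwa [trace_stdBasisMatrix_mul, trace_stdBasisMatrix_mul] at h1
  exact (LinearMap.injective_iff_surjective_of_finrank_eq_finrank
    (f := tp D) (Subspace.dual_finrank_eq).symm).mp hTinj

lemma span_of_sep {D m : ℕ} (A : Fin d → Matrix (Fin D) (Fin D) ℂ) (hsep : Sep A m) :
    Submodule.span ℂ {X | ∃ l : List (Fin d), l.length = m ∧ wp A l = X} = ⊤ := by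
  by_contra hne
  obtain ⟨x, hx⟩ : ∃ x, x ∉ Submodule.span ℂ {X | ∃ l : List (Fin d), l.length = m ∧ wp A l = X} := by
    by_contra hc; push_neg at hc; exact hne (Submodule.eq_top_iff'.mpr hc)
  set U : Submodule ℂ (Matrix (Fin D) (Fin D) ℂ) :=
    Submodule.span ℂ {X | ∃ l : List (Fin d), l.length = m ∧ wp A l = X} with hU
  have hxQ : U.mkQ x ≠ 0 := by
    intro h0
    exact hx (by rwa [← Submodule.ker_mkQ (p := U), LinearMap.mem_ker])
  obtain ⟨f, hf⟩ : ∃ f : Module.Dual ℂ (Matrix (Fin D) (Fin D) ℂ ⧸ U), f (U.mkQ x) ≠ 0 := by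
    by_contra hc; push_neg at hc
    exact hxQ ((Module.forall_dual_apply_eq_zero_iff ℂ _).mp hc)
  obtain ⟨N, hN⟩ := tp_surj D (f ∘ₗ U.mkQ)
  have hNz : N = 0 := by
    apply hsep
    intro l hl
    have h0 : (f ∘ₗ U.mkQ) (wp A l) = 0 := by
      simp only [LinearMap.comp_apply]
      have hm0 : U.mkQ (wp A l) = 0 := by
        rw [← LinearMap.mem_ker, Submodule.ker_mkQ]
        exact Submodule.subset_span ⟨l, hl, rfl⟩
      rw [hm0, map_zero]
    rw [← hN] at h0
    simpa [tp] using h0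
  rw [hNz, map_zero] at hN
  apply hf
  have : (f ∘ₗ U.mkQ) x = 0 := by rw [← hN]; rfl
  simpa using this

end MPS19
namespace MPS19
variable {d : ℕ}

lemma exists_intertwiner {D D' : ℕ} (n m : ℕ) (hmn : m ≤ n)
    (A : Fin d → Matrix (Fin D) (Fin D) ℂ)
    (B : Fin d → Matrix (Fin D') (Fin D') ℂ)
    (hspanA : Submodule.span ℂ {X | ∃ l : List (Fin d), l.length = m ∧ wp A l = X} = ⊤)
    (hsepB : Sep B (n - m)) (hsepA' : Sep A (n - m))
    (hstate : ∀ l : List (Fin d), l.length = n → (wp A l).trace = (wp B l).trace) :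
    ∃ ψ : Matrix (Fin D) (Fin D) ℂ →ₗ[ℂ] Matrix (Fin D') (Fin D') ℂ,
      (∀ l : List (Fin d), l.length = m → ψ (wp A l) = wp B l) ∧
      (∀ X, ∀ v : List (Fin d), v.length = n - m →
          (wp B v * ψ X).trace = (wp A v * X).trace) ∧
      Function.Injective ψ := by
  classical
  obtain ⟨b, hbs, hbsp, hli⟩ := exists_linearIndependent ℂ
    {X | ∃ l : List (Fin d), l.length = m ∧ wp A l = X}
  have hspan : ⊤ ≤ Submodule.span ℂ (Set.range ((↑) : b → Matrix (Fin D) (Fin D) ℂ)) := by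
    rw [Subtype.range_coe, hbsp, hspanA]
  let bas : Module.Basis b ℂ (Matrix (Fin D) (Fin D) ℂ) := Module.Basis.mk hli hspan
  have hword : ∀ x : b, ∃ l : List (Fin d), l.length = m ∧ wp A l = (x : Matrix (Fin D) (Fin D) ℂ) :=
    fun x => hbs x.2
  choose lw hlw1 hlw2 using hword
  let ψ : Matrix (Fin D) (Fin D) ℂ →ₗ[ℂ] Matrix (Fin D') (Fin D') ℂ :=
    bas.constr ℂ fun x => wp B (lw x)
  -- trace transfer property
  have hP : ∀ X, ∀ v : List (Fin d), v.length = n - m →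
      (wp B v * ψ X).trace = (wp A v * X).trace := by
    intro X v hv
    have hfg : (Matrix.traceLinearMap (Fin D') ℂ ℂ ∘ₗ (LinearMap.mulLeft ℂ (wp B v)) ∘ₗ ψ)
        = (Matrix.traceLinearMap (Fin D) ℂ ℂ ∘ₗ (LinearMap.mulLeft ℂ (wp A v))) := by
      apply bas.ext
      intro x
      have h1 : ψ (bas x) = wp B (lw x) := by
        simpa [ψ] using bas.constr_basis ℂ (fun y => wp B (lw y)) x
      have h2 : (bas x : Matrix (Fin D) (Fin D) ℂ) = wp A (lw x) := by
        rw [Module.Basis.mk_apply]; exact (hlw2 x).symm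
      have h1' : ψ (wp A (lw x)) = wp B (lw x) := by rw [← h2]; exact h1
      simp only [LinearMap.comp_apply, h2, h1', LinearMap.mulLeft_apply,
        Matrix.traceLinearMap_apply]
      rw [← wp_append, ← wp_append]
      have hlen : (v ++ lw x).length = n := by
        rw [List.length_append, hv, hlw1 x]; omega
      exact (hstate _ hlen).symm
    have := congrArg (fun φ => φ X) hfg
    simpa using this
  refine ⟨ψ, ?_, hP, ?_⟩
  · -- word property at length m
    intro l hl
    have hz : ψ (wp A l) - wp B l = 0 := by
      apply hsepB
      intro v hv
      rw [mul_sub, Matrix.trace_sub, hP _ v hv, ← wp_append, ← wp_append]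
      have hlen : (v ++ l).length = n := by
        rw [List.length_append, hv, hl]; omega
      rw [hstate _ hlen]
      simp
    have := sub_eq_zero.mp hz
    exact this
  · intro X Y hXY
    have hz : X - Y = 0 := by
      apply hsepA'
      intro v hv
      have : (wp B v * ψ (X - Y)).trace = (wp A v * (X - Y)).trace := hP _ v hv
      rw [map_sub, hXY, sub_self] at this
      rw [← this, mul_zero, trace_zero]
    have := sub_eq_zero.mp hz
    exact this
end MPS19
namespace MPS19

lemma mat_one_ne_zero {D : ℕ} (hD : 0 < D) :
    (1 : Matrix (Fin D) (Fin D) ℂ) ≠ 0 := by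
  intro h
  have := congrFun (congrFun h ⟨0, hD⟩) ⟨0, hD⟩
  simp [Matrix.one_apply] at this

lemma central {D : ℕ} (C : Matrix (Fin D) (Fin D) ℂ) (h : ∀ M, M * C = C * M) :
    ∃ μ : ℂ, C = μ • (1 : Matrix (Fin D) (Fin D) ℂ) := by
  obtain ⟨μ, hμ⟩ := Matrix.mem_range_scalar_of_commute_single
    (M := C) (fun i j _ => h _)
  exact ⟨μ, by rw [← hμ, Matrix.scalar_apply, ← Matrix.smul_one_eq_diagonal]⟩

lemma skolem_noether {D : ℕ} (hD : 0 < D)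
    (χ : Matrix (Fin D) (Fin D) ℂ →ₗ[ℂ] Matrix (Fin D) (Fin D) ℂ)
    (hinj : Function.Injective χ)
    (hmul : ∀ X Y, χ (X * Y) = χ X * χ Y) :
    ∃ Z W : Matrix (Fin D) (Fin D) ℂ, Z * W = 1 ∧ W * Z = 1 ∧ ∀ X, χ X = Z * X * W := by
  classical
  set i0 : Fin D := ⟨0, hD⟩ with hi0
  set F : Fin D → Fin D → Matrix (Fin D) (Fin D) ℂ :=
    fun a b => χ (single a b 1) with hF
  have hFmul : ∀ a b c e : Fin D, F a b * F c e = if b = c then F a e else 0 := by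
    intro a b c e
    by_cases hbc : b = c
    · subst hbc
      rw [if_pos rfl, hF]
      simp only []
      rw [← hmul, Matrix.single_mul_single_same, one_mul]
    · rw [if_neg hbc, hF]
      simp only []
      rw [← hmul, Matrix.single_mul_single_of_ne (h := hbc), map_zero]
  have hF00 : F i0 i0 ≠ 0 := by
    intro h0
    have h1 : single i0 i0 (1:ℂ) = 0 := by
      apply hinj
      rw [map_zero]
      exact h0
    have h2 := congrFun (congrFun h1 i0) i0
    simp [Matrix.single_apply_same] at h2
  obtain ⟨a0, b0, hab⟩ : ∃ a b, F i0 i0 a b ≠ 0 := by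
    by_contra hc; push_neg at hc
    exact hF00 (by ext a b; simpa using hc a b)
  set Z : Matrix (Fin D) (Fin D) ℂ :=
    ∑ c : Fin D, F c i0 * single b0 i0 1 * single i0 c 1 with hZ
  have hZcomm0 : ∀ a b : Fin D, F a b * Z = Z * single a b 1 := by
    intro a b
    have hLs : F a b * Z
        = F a i0 * single b0 i0 1 * single i0 b 1 := by
      rw [hZ, Finset.mul_sum]
      rw [Finset.sum_eq_single_of_mem b (Finset.mem_univ b)
        (fun c _ hc => by
          rw [← mul_assoc, ← mul_assoc, hFmul, if_neg (Ne.symm hc), zero_mul, zero_mul])]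
      rw [← mul_assoc, ← mul_assoc, hFmul, if_pos rfl]
    have hRs : Z * single a b 1
        = F a i0 * single b0 i0 1 * single i0 b 1 := by
      rw [hZ, Finset.sum_mul]
      rw [Finset.sum_eq_single_of_mem a (Finset.mem_univ a)
        (fun c _ hc => by
          rw [mul_assoc, Matrix.single_mul_single_of_ne (h := hc), mul_zero])]
      rw [mul_assoc, Matrix.single_mul_single_same, one_mul]
    rw [hLs, hRs]
  have hZcomm : ∀ X, χ X * Z = Z * X := by
    have hfg : (LinearMap.mulRight ℂ Z) ∘ₗ χ = (LinearMap.mulLeft ℂ Z) := by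
      apply Module.Basis.ext (Matrix.stdBasis ℂ (Fin D) (Fin D))
      rintro ⟨a, b⟩
      rw [Matrix.stdBasis_eq_single]
      simp only [LinearMap.comp_apply, LinearMap.mulRight_apply, LinearMap.mulLeft_apply]
      exact hZcomm0 a b
    intro X; have := congrArg (fun f => f X) hfg; simpa using this
  have hZne : Z ≠ 0 := by
    intro h0
    have h1 : Z a0 i0 = F i0 i0 a0 b0 := by
      rw [hZ, Matrix.sum_apply]
      rw [Finset.sum_eq_single_of_mem i0 (Finset.mem_univ i0)
        (fun c _ hc => by
          rw [Matrix.mul_single_apply_of_ne (hbj := Ne.symm hc)])]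
      rw [Matrix.mul_single_apply_same, mul_one]
      rw [Matrix.mul_single_apply_same, mul_one]
    rw [h0] at h1
    exact hab (by rw [← h1]; rfl)
  have hker : ∀ v : Fin D → ℂ, Z *ᵥ v = 0 → v = 0 := by
    intro v hv
    by_contra hvne
    obtain ⟨b, hb⟩ : ∃ b, v b ≠ 0 := by
      by_contra hc; push_neg at hc; exact hvne (funext hc)
    apply hZne
    ext i c
    have h1 : (Z * single c b 1) *ᵥ v = 0 := by
      rw [← hZcomm (single c b 1), ← Matrix.mulVec_mulVec, hv, Matrix.mulVec_zero]
    have h2 : ((Z * single c b 1) *ᵥ v) i = Z i c * v b := by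
      simp only [Matrix.mulVec, dotProduct]
      rw [Finset.sum_eq_single_of_mem b (Finset.mem_univ b)
        (fun k _ hk => by
          rw [Matrix.mul_single_apply_of_ne (hbj := hk), zero_mul])]
      rw [Matrix.mul_single_apply_same, mul_one]
    rw [h1] at h2
    have h3 : Z i c * v b = 0 := by rw [← h2]; rfl
    rcases mul_eq_zero.mp h3 with h | h
    · simpa using h
    · exact absurd h hb
  -- build the inverse
  have hfinj : Function.Injective (Matrix.toLin' Z) := by
    intro x y hxy
    have : Z *ᵥ (x - y) = 0 := by
      rw [Matrix.mulVec_sub]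
      rw [← Matrix.toLin'_apply, ← Matrix.toLin'_apply, hxy, sub_self]
    have := hker _ this
    exact sub_eq_zero.mp this
  have hfsurj : Function.Surjective (Matrix.toLin' Z) :=
    LinearMap.injective_iff_surjective.mp hfinj
  let ef := LinearEquiv.ofBijective (Matrix.toLin' Z) ⟨hfinj, hfsurj⟩
  refine ⟨Z, LinearMap.toMatrix' (ef.symm : (Fin D → ℂ) →ₗ[ℂ] Fin D → ℂ), ?_, ?_, ?_⟩
  · have hcomp : (Matrix.toLin' Z) ∘ₗ (ef.symm : (Fin D → ℂ) →ₗ[ℂ] Fin D → ℂ)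
        = LinearMap.id := LinearMap.ext fun x => ef.apply_symm_apply x
    have := congrArg LinearMap.toMatrix' hcomp
    rwa [LinearMap.toMatrix'_comp, LinearMap.toMatrix'_toLin', LinearMap.toMatrix'_id] at this
  · have hcomp : (ef.symm : (Fin D → ℂ) →ₗ[ℂ] Fin D → ℂ) ∘ₗ (Matrix.toLin' Z)
        = LinearMap.id := LinearMap.ext fun x => ef.symm_apply_apply x
    have := congrArg LinearMap.toMatrix' hcomp
    rwa [LinearMap.toMatrix'_comp, LinearMap.toMatrix'_toLin', LinearMap.toMatrix'_id] at this
  · intro X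
    have h1 : Z * LinearMap.toMatrix' (ef.symm : (Fin D → ℂ) →ₗ[ℂ] Fin D → ℂ) = 1 := by
      have hcomp : (Matrix.toLin' Z) ∘ₗ (ef.symm : (Fin D → ℂ) →ₗ[ℂ] Fin D → ℂ)
          = LinearMap.id := LinearMap.ext fun x => ef.apply_symm_apply x
      have := congrArg LinearMap.toMatrix' hcomp
      rwa [LinearMap.toMatrix'_comp, LinearMap.toMatrix'_toLin', LinearMap.toMatrix'_id] at this
    calc χ X = χ X * (Z * LinearMap.toMatrix' (ef.symm : (Fin D → ℂ) →ₗ[ℂ] Fin D → ℂ)) := by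
            rw [h1, mul_one]
      _ = (χ X * Z) * LinearMap.toMatrix' (ef.symm : (Fin D → ℂ) →ₗ[ℂ] Fin D → ℂ) := by
            rw [mul_assoc]
      _ = Z * X * LinearMap.toMatrix' (ef.symm : (Fin D → ℂ) →ₗ[ℂ] Fin D → ℂ) := by
            rw [hZcomm]

end MPS19
open MPS19

set_option maxHeartbeats 1000000 in
/-- improved system-size bound for the fundamental theorem of
translationally invariant normal MPS: `n ≥ 2L + 1` sites suffice. -/
theorem fundamental_theorem_TI_normal_MPS_improved (n L d D D' : ℕ)
    (hL : 1 ≤ L) (hn : 2 * L + 1 ≤ n)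
    (A : Fin d → Matrix (Fin D) (Fin D) ℂ) (B : Fin d → Matrix (Fin D') (Fin D') ℂ)
    (hA : Function.Injective fun X : Matrix (Fin D) (Fin D) ℂ =>
      fun i : Fin L → Fin d => (((List.ofFn fun k => A (i k)).prod) * Xᵀ).trace)
    (hB : Function.Injective fun X : Matrix (Fin D') (Fin D') ℂ =>
      fun i : Fin L → Fin d => (((List.ofFn fun k => B (i k)).prod) * Xᵀ).trace)
    (hstate : ∀ i : Fin n → Fin d,
      ((List.ofFn fun k => A (i k)).prod).trace = ((List.ofFn fun k => B (i k)).prod).trace) :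
    D = D' ∧
    ∃ (Z : Matrix (Fin D) (Fin D') ℂ) (W : Matrix (Fin D') (Fin D) ℂ) (lam : ℂ),
      Z * W = 1 ∧ W * Z = 1 ∧ lam ^ n = 1 ∧
      (∀ i, B i = lam • (W * A i * Z)) ∧
      ∀ (Z' : Matrix (Fin D) (Fin D') ℂ) (W' : Matrix (Fin D') (Fin D) ℂ) (lam' : ℂ),
        Z' * W' = 1 → W' * Z' = 1 → lam' ^ n = 1 →
        (∀ i, B i = lam' • (W' * A i * Z')) →
        ∃ c : ℂ, c ≠ 0 ∧ Z' = c • Z := by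
  classical
  have sepA : Sep A L := sep_of_inj A hA
  have sepB : Sep B L := sep_of_inj B hB
  have hst : ∀ l : List (Fin d), l.length = n → (wp A l).trace = (wp B l).trace := by
    intro l hl
    obtain ⟨w, rfl⟩ := exists_ofFn l hl
    rw [wp_ofFn, wp_ofFn]
    exact hstate w
  rcases Nat.eq_zero_or_pos D with hD0 | hDpos
  · -- D = 0
    subst hD0
    have htr0 : ∀ M : Matrix (Fin 0) (Fin 0) ℂ, M.trace = 0 := by
      intro M; simp [Matrix.trace]
    have hD'0 : D' = 0 := by
      by_contra hne
      have hpos : 0 < D' := Nat.pos_of_ne_zero hne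
      have h1 : (1 : Matrix (Fin D') (Fin D') ℂ) = 0 := by
        apply sep_ge B hL sepB n (by omega)
        intro l hl
        rw [mul_one, ← hst l hl, htr0]
      exact mat_one_ne_zero hpos h1
    subst hD'0
    haveI hss : Subsingleton (Matrix (Fin 0) (Fin 0) ℂ) :=
      ⟨fun M N => by ext i; exact i.elim0⟩
    refine ⟨rfl, 0, 0, 1, Subsingleton.elim _ _, Subsingleton.elim _ _, one_pow n,
      fun i => Subsingleton.elim _ _, ?_⟩
    intro Z' W' lam' _ _ _ _
    exact ⟨1, one_ne_zero, Subsingleton.elim _ _⟩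
  rcases Nat.eq_zero_or_pos D' with hD'0 | hD'pos
  · exfalso
    subst hD'0
    have htr0 : ∀ M : Matrix (Fin 0) (Fin 0) ℂ, M.trace = 0 := by
      intro M; simp [Matrix.trace]
    have h1 : (1 : Matrix (Fin D) (Fin D) ℂ) = 0 := by
      apply sep_ge A hL sepA n (by omega)
      intro l hl
      rw [mul_one, hst l hl, htr0]
    exact mat_one_ne_zero hDpos h1
  -- main case
  have spanA_L := span_of_sep A sepA
  have spanB_L := span_of_sep B sepB
  have spanA_L1 := span_of_sep A (sep_ge A hL sepA (L+1) (by omega))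
  obtain ⟨ψ, hψw, hψt, hψinj⟩ := exists_intertwiner n L (by omega) A B spanA_L
    (sep_ge B hL sepB (n - L) (by omega)) (sep_ge A hL sepA (n - L) (by omega)) hst
  obtain ⟨ψ', hψ'w, hψ't, hψ'inj⟩ := exists_intertwiner n L (by omega) B A spanB_L
    (sep_ge A hL sepA (n - L) (by omega)) (sep_ge B hL sepB (n - L) (by omega))
    (fun l hl => (hst l hl).symm)
  have hDD' : D = D' := by
    have h1 : D * D ≤ D' * D' := by
      have h := LinearMap.finrank_le_finrank_of_injective hψinj
      rwa [Module.finrank_matrix, Module.finrank_matrix, Module.finrank_self, mul_one, mul_one,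
        Fintype.card_fin, Fintype.card_fin] at h
    have h2 : D' * D' ≤ D * D := by
      have h := LinearMap.finrank_le_finrank_of_injective hψ'inj
      rwa [Module.finrank_matrix, Module.finrank_matrix, Module.finrank_self, mul_one, mul_one,
        Fintype.card_fin, Fintype.card_fin] at h
    by_contra hne
    rcases Nat.lt_or_ge D D' with hlt | hge
    · have := Nat.mul_self_lt_mul_self hlt; omega
    · have hlt : D' < D := by omega
      have := Nat.mul_self_lt_mul_self hlt; omega
  subst hDD'
  obtain ⟨φ, hφw, hφt, hφinj⟩ := exists_intertwiner n (L+1) (by omega) A B spanA_L1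
    (sep_ge B hL sepB (n - (L+1)) (by omega)) (sep_ge A hL sepA (n - (L+1)) (by omega)) hst
  have sepBm : Sep B (n - (L+1)) := sep_ge B hL sepB _ (by omega)
  -- the two exchange relations
  have rel1 : ∀ (i : Fin d) (X : Matrix (Fin D) (Fin D) ℂ), φ (A i * X) = B i * ψ X := by
    intro i X
    have hz : φ (A i * X) - B i * ψ X = 0 := by
      apply sepBm
      intro v hv
      have e1 : (wp B v * φ (A i * X)).trace = (wp A v * (A i * X)).trace := hφt _ v hv
      have hlen : (v ++ [i]).length = n - L := by
        rw [List.length_append, hv]; simp; omega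
      have h3 := hψt X (v ++ [i]) hlen
      rw [wp_append, wp_append, wp_singleton, wp_singleton] at h3
      have e2 : (wp B v * (B i * ψ X)).trace = (wp A v * (A i * X)).trace := by
        rw [← mul_assoc, ← mul_assoc]; exact h3
      rw [mul_sub, Matrix.trace_sub, e1, e2, sub_self]
    exact sub_eq_zero.mp hz
  have rel2 : ∀ (i : Fin d) (X : Matrix (Fin D) (Fin D) ℂ), φ (X * A i) = ψ X * B i := by
    intro i X
    have hz : φ (X * A i) - ψ X * B i = 0 := by
      apply sepBm
      intro v hv
      have e1 : (wp B v * φ (X * A i)).trace = (wp A v * (X * A i)).trace := hφt _ v hv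
      have hlen : (i :: v).length = n - L := by simp [hv]; omega
      have h3 := hψt X (i :: v) hlen
      rw [wp_cons, wp_cons] at h3
      have e2 : (wp B v * (ψ X * B i)).trace = (wp A v * (X * A i)).trace := by
        rw [Matrix.trace_mul_comm (wp B v), Matrix.trace_mul_comm (wp A v)]
        rw [mul_assoc, mul_assoc]
        rw [Matrix.trace_mul_comm (ψ X), Matrix.trace_mul_comm X]
        exact h3
      rw [mul_sub, Matrix.trace_sub, e1, e2, sub_self]
    exact sub_eq_zero.mp hz
  -- the comparison endomorphism Δ
  have hψsurj : Function.Surjective ψ := LinearMap.injective_iff_surjective.mp hψinj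
  let ψe : Matrix (Fin D) (Fin D) ℂ ≃ₗ[ℂ] Matrix (Fin D) (Fin D) ℂ :=
    LinearEquiv.ofBijective ψ ⟨hψinj, hψsurj⟩
  let Δ : Matrix (Fin D) (Fin D) ℂ →ₗ[ℂ] Matrix (Fin D) (Fin D) ℂ :=
    (ψe.symm : Matrix (Fin D) (Fin D) ℂ →ₗ[ℂ] Matrix (Fin D) (Fin D) ℂ) ∘ₗ φ
  have hψΔ : ∀ X, ψ (Δ X) = φ X := by
    intro X
    show ψ (ψe.symm (φ X)) = φ X
    exact ψe.apply_symm_apply (φ X)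
  have R1 : ∀ (i j : Fin d) X, A i * Δ (X * A j) = Δ (A i * X) * A j := by
    intro i j X
    apply hφinj
    calc φ (A i * Δ (X * A j)) = B i * ψ (Δ (X * A j)) := rel1 i _
      _ = B i * φ (X * A j) := by rw [hψΔ]
      _ = B i * (ψ X * B j) := by rw [rel2]
      _ = (B i * ψ X) * B j := by rw [mul_assoc]
      _ = φ (A i * X) * B j := by rw [rel1]
      _ = ψ (Δ (A i * X)) * B j := by rw [hψΔ]
      _ = φ (Δ (A i * X) * A j) := (rel2 j _).symm
  have RW : ∀ (u v : List (Fin d)), u.length = v.length → ∀ X,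
      wp A u * Δ (X * wp A v) = Δ (wp A u * X) * wp A v := by
    intro u
    induction u with
    | nil =>
      intro v hv X
      have hv0 : v = [] := List.eq_nil_of_length_eq_zero (by simpa using hv.symm)
      subst hv0; simp
    | cons i u ih =>
      intro v hv X
      cases v with
      | nil => simp at hv
      | cons j v' =>
        simp only [List.length_cons] at hv
        rw [wp_cons, wp_cons]
        have h1 : X * (A j * wp A v') = (X * A j) * wp A v' := by rw [mul_assoc]
        rw [h1, mul_assoc, ih v' (by omega) (X * A j)]
        rw [← mul_assoc]
        have h2 : wp A u * (X * A j) = (wp A u * X) * A j := by rw [mul_assoc]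
        rw [h2, R1 i j (wp A u * X)]
        simp only [mul_assoc]
  -- bilinear extension
  have key : ∀ M N X : Matrix (Fin D) (Fin D) ℂ, M * Δ (X * N) = Δ (M * X) * N := by
    have stage1 : ∀ (v : List (Fin d)), v.length = L →
        ∀ (X M : Matrix (Fin D) (Fin D) ℂ), M * Δ (X * wp A v) = Δ (M * X) * wp A v := by
      intro v hvl X
      have hfg : (LinearMap.mulRight ℂ (Δ (X * wp A v)))
          = (LinearMap.mulRight ℂ (wp A v)) ∘ₗ Δ ∘ₗ (LinearMap.mulRight ℂ X) := by
        apply LinearMap.ext_on spanA_L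
        intro x hx
        obtain ⟨u, hu, rfl⟩ := hx
        simp only [LinearMap.mulRight_apply, LinearMap.comp_apply]
        exact RW u v (by omega) X
      intro M; have := congrArg (fun f => f M) hfg; simpa using this
    intro M N X
    have hfg2 : (LinearMap.mulLeft ℂ M) ∘ₗ Δ ∘ₗ (LinearMap.mulLeft ℂ X)
        = (LinearMap.mulLeft ℂ (Δ (M * X))) := by
      apply LinearMap.ext_on spanA_L
      intro x hx; obtain ⟨v, hvl, rfl⟩ := hx
      simp only [LinearMap.mulLeft_apply, LinearMap.comp_apply]
      exact stage1 v hvl X M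
    have := congrArg (fun f => f N) hfg2; simpa using this
  -- Δ is scalar
  have hC : ∀ M, M * Δ 1 = Δ M := by
    intro M; have := key M 1 1; simpa using this
  have hC' : ∀ N, Δ N = Δ 1 * N := by
    intro N; have := key 1 N 1; simpa using this
  obtain ⟨μ, hμ⟩ := central (Δ 1) (fun M => by rw [hC M, hC' M])
  have hΔ : ∀ X, Δ X = μ • X := by
    intro X; rw [← hC X, hμ, mul_smul_comm, mul_one]
  have hφψ : ∀ X, φ X = μ • ψ X := by
    intro X; rw [← hψΔ X, hΔ X]; exact ψ.map_smul μ X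
  have rel1' : ∀ (i : Fin d) X, B i * ψ X = μ • ψ (A i * X) := by
    intro i X; rw [← rel1 i X, hφψ]
  have rel2' : ∀ (i : Fin d) X, ψ X * B i = μ • ψ (X * A i) := by
    intro i X; rw [← rel2 i X, hφψ]
  have WrelB : ∀ (l : List (Fin d)) X, wp B l * ψ X = μ ^ l.length • ψ (wp A l * X) := by
    intro l
    induction l with
    | nil => intro X; simp
    | cons i l ih =>
      intro X
      calc wp B (i :: l) * ψ X = B i * (wp B l * ψ X) := by rw [wp_cons, mul_assoc]
        _ = B i * (μ ^ l.length • ψ (wp A l * X)) := by rw [ih X]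
        _ = μ ^ l.length • (B i * ψ (wp A l * X)) := by rw [mul_smul_comm]
        _ = μ ^ l.length • (μ • ψ (A i * (wp A l * X))) := by rw [rel1']
        _ = μ ^ (i :: l).length • ψ (wp A (i :: l) * X) := by
            rw [smul_smul, List.length_cons, pow_succ, wp_cons, mul_assoc]
  have hE2 : ∀ i, ψ 1 * B i = μ • ψ (A i) := by
    intro i; have := rel2' i 1; simpa using this
  have hEcommB : ∀ i, B i * ψ 1 = ψ 1 * B i := by
    intro i
    have h1 := rel1' i 1
    rw [mul_one] at h1
    rw [h1, hE2 i]
  have hEcommW : ∀ l : List (Fin d), wp B l * ψ 1 = ψ 1 * wp B l := by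
    intro l; induction l with
    | nil => simp
    | cons i l ih => rw [wp_cons, mul_assoc, ih, ← mul_assoc, hEcommB, mul_assoc]
  have hEcomm : ∀ M, M * ψ 1 = ψ 1 * M := by
    have hfg : (LinearMap.mulRight ℂ (ψ 1)) = (LinearMap.mulLeft ℂ (ψ 1)) := by
      apply LinearMap.ext_on spanB_L
      intro x hx; obtain ⟨l, hl, rfl⟩ := hx
      simpa using hEcommW l
    intro M; have := congrArg (fun f => f M) hfg; simpa using this
  obtain ⟨e, he⟩ := central (ψ 1) hEcomm
  have heμ : e = μ ^ L := by
    have hsm : ∀ l : List (Fin d), l.length = L → (e - μ ^ L) • wp B l = 0 := by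
      intro l hl
      have h1 := WrelB l 1
      rw [mul_one, hψw l hl, hl, he, mul_smul_comm, mul_one] at h1
      rw [sub_smul, h1, sub_self]
    have hfg : ((e - μ ^ L) •
        (LinearMap.id : Matrix (Fin D) (Fin D) ℂ →ₗ[ℂ] Matrix (Fin D) (Fin D) ℂ)) = 0 := by
      apply LinearMap.ext_on spanB_L
      intro x hx; obtain ⟨l, hl, rfl⟩ := hx
      simp only [LinearMap.smul_apply, LinearMap.id_apply, LinearMap.zero_apply]
      exact hsm l hl
    have h2 := congrArg (fun f => f (1 : Matrix (Fin D) (Fin D) ℂ)) hfg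
    simp only [LinearMap.smul_apply, LinearMap.id_apply, LinearMap.zero_apply] at h2
    rcases smul_eq_zero.mp h2 with h | h
    · exact sub_eq_zero.mp h
    · exact absurd h (mat_one_ne_zero hDpos)
  have heNe : e ≠ 0 := by
    intro h0
    have h1 : ψ 1 = ψ 0 := by rw [he, h0, zero_smul, map_zero]
    exact mat_one_ne_zero hDpos (hψinj h1)
  have hμNe : μ ≠ 0 := by
    intro h0; apply heNe; rw [heμ, h0, zero_pow (by omega)]
  -- the normalized isomorphism χ
  set χ : Matrix (Fin D) (Fin D) ℂ →ₗ[ℂ] Matrix (Fin D) (Fin D) ℂ := e⁻¹ • ψ with hχdef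
  have hχ : ∀ X, χ X = e⁻¹ • ψ X := fun X => rfl
  have hχmul : ∀ Y X, χ (X * Y) = χ X * χ Y := by
    intro Y
    have hfg : χ ∘ₗ (LinearMap.mulRight ℂ Y) = (LinearMap.mulRight ℂ (χ Y)) ∘ₗ χ := by
      apply LinearMap.ext_on spanA_L
      intro x hx; obtain ⟨l, hl, rfl⟩ := hx
      simp only [LinearMap.comp_apply, LinearMap.mulRight_apply]
      have h1 := WrelB l Y
      rw [hl] at h1
      have h2 : ψ (wp A l * Y) = (μ ^ L)⁻¹ • (wp B l * ψ Y) := by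
        rw [h1, smul_smul, inv_mul_cancel₀ (pow_ne_zero L hμNe), one_smul]
      simp only [hχ]
      rw [h2, hψw l hl, ← heμ]
      simp only [smul_smul, smul_mul_assoc, mul_smul_comm]
    intro X; have := congrArg (fun f => f X) hfg; simpa using this
  have hχinj : Function.Injective χ := by
    intro X Y hXY
    apply hψinj
    have h1 : e⁻¹ • ψ X = e⁻¹ • ψ Y := hXY
    have h2 := congrArg (fun z => e • z) h1
    simpa [smul_smul, mul_inv_cancel₀ heNe] using h2
  obtain ⟨Zsn, Wsn, hZW, hWZ, hχZ⟩ :=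
    skolem_noether hDpos χ hχinj (fun X Y => hχmul Y X)
  have hBi : ∀ i, B i = μ • (Zsn * A i * Wsn) := by
    intro i
    have h1 := hE2 i
    rw [he, smul_mul_assoc, one_mul] at h1
    have h3 := congrArg (fun z => e⁻¹ • z) h1
    simp only [smul_smul] at h3
    rw [inv_mul_cancel₀ heNe, one_smul] at h3
    -- h3 : B i = (e⁻¹ * μ) • ψ (A i)
    rw [h3, mul_comm, ← smul_smul, ← hχ (A i), hχZ]
  have hword : ∀ l : List (Fin d), wp B l = μ ^ l.length • (Zsn * wp A l * Wsn) := by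
    intro l
    induction l with
    | nil => simp [hZW]
    | cons i l ih =>
      calc wp B (i :: l) = (μ • (Zsn * A i * Wsn)) * (μ ^ l.length • (Zsn * wp A l * Wsn)) := by
            rw [wp_cons, hBi i, ih]
        _ = (μ * μ ^ l.length) • (Zsn * A i * Wsn * (Zsn * wp A l * Wsn)) := by
            rw [smul_mul_assoc, mul_smul_comm, smul_smul]
        _ = (μ * μ ^ l.length) • (Zsn * (A i * wp A l) * Wsn) := by
            congr 1
            have hWZ' : ∀ X, Wsn * (Zsn * X) = X := fun X => by
              rw [← mul_assoc, hWZ, one_mul]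
            simp only [mul_assoc, hWZ']
        _ = μ ^ (i :: l).length • (Zsn * wp A (i :: l) * Wsn) := by
            rw [wp_cons, List.length_cons, pow_succ, mul_comm (μ ^ l.length) μ]
  have hpow : μ ^ n = 1 := by
    by_contra hne
    have h0 : ∀ l : List (Fin d), l.length = n → (wp A l * 1).trace = 0 := by
      intro l hl
      rw [mul_one]
      have h1 := hst l hl
      rw [hword l, hl, Matrix.trace_smul] at h1
      have h2 : (Zsn * wp A l * Wsn).trace = (wp A l).trace := by
        rw [Matrix.trace_mul_cycle, hWZ, one_mul]
      rw [h2, smul_eq_mul] at h1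
      have h3 : (1 - μ ^ n) * (wp A l).trace = 0 := by
        rw [sub_mul, one_mul]
        linear_combination h1
      rcases mul_eq_zero.mp h3 with h | h
      · exact absurd (sub_eq_zero.mp h).symm hne
      · exact h
    exact absurd (sep_ge A hL sepA n (by omega) 1 h0) (mat_one_ne_zero hDpos)
  refine ⟨rfl, Wsn, Zsn, μ, hWZ, hZW, hpow, hBi, ?_⟩
  -- uniqueness
  intro Z' W' lam' hZ'W' hW'Z' hlam' hB'
  have hword' : ∀ l : List (Fin d), wp B l = lam' ^ l.length • (W' * wp A l * Z') := by
    intro l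
    induction l with
    | nil => simp [hW'Z']
    | cons i l ih =>
      calc wp B (i :: l) = (lam' • (W' * A i * Z')) * (lam' ^ l.length • (W' * wp A l * Z')) := by
            rw [wp_cons, hB' i, ih]
        _ = (lam' * lam' ^ l.length) • (W' * A i * Z' * (W' * wp A l * Z')) := by
            rw [smul_mul_assoc, mul_smul_comm, smul_smul]
        _ = (lam' * lam' ^ l.length) • (W' * (A i * wp A l) * Z') := by
            congr 1
            have hZW'' : ∀ X, Z' * (W' * X) = X := fun X => by
              rw [← mul_assoc, hZ'W', one_mul]
            simp only [mul_assoc, hZW'']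
        _ = lam' ^ (i :: l).length • (W' * wp A (i :: l) * Z') := by
            rw [wp_cons, List.length_cons, pow_succ, mul_comm (lam' ^ l.length) lam']
  have hμL : (μ : ℂ) ^ L ≠ 0 := pow_ne_zero _ hμNe
  have spanEq : ∀ M : Matrix (Fin D) (Fin D) ℂ,
      μ ^ L • (Zsn * M * Wsn) = lam' ^ L • (W' * M * Z') := by
    have hfg : (μ ^ L • ((LinearMap.mulRight ℂ Wsn) ∘ₗ (LinearMap.mulLeft ℂ Zsn)))
        = (lam' ^ L • ((LinearMap.mulRight ℂ Z') ∘ₗ (LinearMap.mulLeft ℂ W'))) := by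
      apply LinearMap.ext_on spanA_L
      intro x hx; obtain ⟨l, hl, rfl⟩ := hx
      simp only [LinearMap.smul_apply, LinearMap.comp_apply, LinearMap.mulLeft_apply,
        LinearMap.mulRight_apply]
      rw [← hl, ← hword l, ← hword' l]
    intro M; have := congrArg (fun f => f M) hfg; simpa using this
  have hMH : ∀ M : Matrix (Fin D) (Fin D) ℂ,
      μ ^ L • (M * (Wsn * W')) = lam' ^ L • ((Wsn * W') * M) := by
    intro M
    have h1 := congrArg (fun X => Wsn * X * W') (spanEq M)
    simp only [Matrix.mul_smul, Matrix.smul_mul] at h1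
    have e1 : Wsn * (Zsn * M * Wsn) * W' = M * (Wsn * W') := by
      have h' : ∀ X, Wsn * (Zsn * X) = X := fun X => by rw [← mul_assoc, hWZ, one_mul]
      simp only [mul_assoc, h']
    have e2 : Wsn * (W' * M * Z') * W' = (Wsn * W') * M := by
      simp only [mul_assoc, hZ'W', mul_one]
    rw [e1, e2] at h1
    exact h1
  have hHinv1 : (Wsn * W') * (Z' * Zsn) = 1 := by
    calc (Wsn * W') * (Z' * Zsn) = Wsn * ((W' * Z') * Zsn) := by simp only [mul_assoc]
      _ = Wsn * Zsn := by rw [hW'Z', one_mul]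
      _ = 1 := hWZ
  have hHne : (Wsn * W') ≠ 0 := by
    intro h0
    rw [h0, zero_mul] at hHinv1
    exact mat_one_ne_zero hDpos hHinv1.symm
  have hlamL : μ ^ L = lam' ^ L := by
    have h1 := hMH 1
    rw [one_mul, mul_one] at h1
    have h2 : (μ ^ L - lam' ^ L) • (Wsn * W') = 0 := by rw [sub_smul, h1, sub_self]
    rcases smul_eq_zero.mp h2 with h | h
    · exact sub_eq_zero.mp h
    · exact absurd h hHne
  have hcomm : ∀ M, M * (Wsn * W') = (Wsn * W') * M := by
    intro M
    have h1 := hMH M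
    rw [← hlamL] at h1
    exact smul_right_injective _ hμL h1
  obtain ⟨c, hc⟩ := central (Wsn * W') hcomm
  have hcne : c ≠ 0 := by
    intro h0; rw [h0, zero_smul] at hc; exact hHne hc
  refine ⟨c⁻¹, inv_ne_zero hcne, ?_⟩
  have h4 : (Z' * Zsn) * (Wsn * W') = 1 := by
    calc (Z' * Zsn) * (Wsn * W') = Z' * ((Zsn * Wsn) * W') := by simp only [mul_assoc]
      _ = Z' * W' := by rw [hZW, one_mul]
      _ = 1 := hZ'W'
  rw [hc, mul_smul_comm, mul_one] at h4
  have h5 : Z' * Zsn = c⁻¹ • (1 : Matrix (Fin D) (Fin D) ℂ) := by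
    have h6 := congrArg (fun X => c⁻¹ • X) h4
    simp only [smul_smul] at h6
    rw [inv_mul_cancel₀ hcne, one_smul] at h6
    exact h6
  calc Z' = Z' * (Zsn * Wsn) := by rw [hZW, mul_one]
    _ = (Z' * Zsn) * Wsn := by rw [mul_assoc]
    _ = (c⁻¹ • (1 : Matrix (Fin D) (Fin D) ℂ)) * Wsn := by rw [h5]
    _ = c⁻¹ • Wsn := by rw [smul_mul_assoc, one_mul]
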